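/- Let t, s, u be integers with t ≥ 2, u ≥ 0, s ≥ 0 and u + s ≤ t − 2. Then Σ_{r=0}^{t−u−s−1} (−1)^r·(6/π)^{2r}·binom(−1/2−r, t−u−s−r−1) = −(−1)^{s+t+u}·π^{2+2s−2t+2u}·(36+π²)^{t−u−s−1} − (−1)^{s+u}·π^{2+2s+2u}·(36+π²)^{−1−s−u}·binom(−1/2, t)/(2t−1) + (−1)^{s+t+u}·π^{2+2s−2t+2u}·(36+π²)^{t−u−s−1}·Σ_{i=1}^{t} π^{2i}·(−1/(36+π²))^i·binom(−1/2, i)/(2i−1) + (1/2)·(−1)^{s+u}·π^{2+2s+2u}·(36+π²)^{−1−s−u}·Σ_{i=1}^{u} π^{−2i}·(−36−π²)^i·binom(−1/2, t−1−i)/(t−i) + (1/2)·(−1)^{s}·π^{2+2s}·(36+π²)^{−1−s}·Σ_{i=1}^{s} π^{−2i}·(−36−π²)^i·binom(−1/2, t−u−1−i)/(t−u−i). -/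

import Mathlib

open Real BigOperators Finset

noncomputable section

/-- The partition function `p(n)`. -/
def pp (n : ℕ) : ℕ := Fintype.card (Nat.Partition n)

/-- `μ(n) = (π/6)·√(24n−1)`. -/
def μ (n : ℕ) : ℝ := π / 6 * Real.sqrt (24 * (n : ℝ) - 1)

/-- `α = π/6`. -/
def αc : ℝ := π / 6

/-- Rising factorial `(a)_m`. -/
def rf (a : ℝ) : ℕ → ℝ
  | 0 => 1
  | m + 1 => rf a m * (a + (m : ℝ))

/-- Falling factorial `x(x−1)⋯(x−n+1)`. -/
def ff (x : ℝ) : ℕ → ℝ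
  | 0 => 1
  | n + 1 => ff x n * (x - (n : ℝ))

/-- Generalized binomial coefficient for real `x`. -/
def gbinom (x : ℝ) (n : ℕ) : ℝ := ff x n / (Nat.factorial n : ℝ)

/-- The coefficients `ω_k(t)`. -/
def ω (k t : ℕ) : ℝ :=
  ((24 * (k : ℝ) - 1) / (4 * Real.sqrt 6)) ^ t *
    ∑ l ∈ Finset.range ((t + 1) / 2 + 1),
      (Nat.choose (t + 1) l : ℝ) * ((t + 1 - l : ℕ) : ℝ) /
          (Nat.factorial (t + 1 - 2 * l) : ℝ) *
        (-1 : ℝ) ^ l * (π / 6) ^ ((t : ℤ) - 2 * (l : ℤ)) *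
        (24 * (k : ℝ) - 1) ^ (-(l : ℤ))

/-- `E_1(t)`. -/
def E1 (t : ℕ) : ℝ :=
  if t = 0 then 1
  else
    (-1 / 24 : ℝ) ^ t * (rf (1 / 2 - (t : ℝ)) (t + 1) / (t : ℝ)) *
      ∑ u ∈ Finset.Icc 1 t,
        (-1 : ℝ) ^ u * rf (-(t : ℝ)) u * αc ^ (2 * u) /
          ((Nat.factorial (t + u) : ℝ) * (Nat.factorial (2 * u - 1) : ℝ))

/-- `O_1(t)`. -/
def O1 (t : ℕ) : ℝ :=
  π / (12 * Real.sqrt 6) * ((-1 : ℝ) ^ t * rf (1 / 2 - (t : ℝ)) (t + 1) / 24 ^ t) *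
    ∑ u ∈ Finset.range (t + 1),
      (-1 : ℝ) ^ u * rf (-(t : ℝ)) u * αc ^ (2 * u) /
        ((Nat.factorial (t + u + 1) : ℝ) * (Nat.factorial (2 * u) : ℝ))

/-- `e_2(t)`. -/
def e2 (t : ℕ) : ℝ :=
  if t = 0 then 1 else 36 / (π ^ 2 + 36) * ((1 + (αc ^ 2)⁻¹) / 24) ^ t

/-- `o_2(t)`. -/
def o2 (t : ℕ) : ℝ :=
  6 / (π * Real.sqrt 24) * (-1 / 24 : ℝ) ^ t *
    ∑ m ∈ Finset.range (t + 1),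
      (-(αc ^ 2)⁻¹) ^ m * gbinom (-(2 * (m : ℝ) + 1) / 2) (t - m)

/-- `E_2(t)`. -/
def E2 (t : ℕ) : ℝ :=
  if t = 0 then 1
  else if t = 1 then (36 - π ^ 2) / (24 * π ^ 2)
  else 54 / (π ^ 4 * (1 + (αc ^ 2)⁻¹)) * ((1 + (αc ^ 2)⁻¹) / 24) ^ (t - 1)

/-- `O_2(t)`. -/
def O2 (t : ℕ) : ℝ := if t = 0 then o2 0 else o2 t - o2 (t - 1) / 24

/-- `h_1` with `h_1(2t) = E_1(t)`, `h_1(2t+1) = O_1(t)`. -/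
def h1 (n : ℕ) : ℝ := if n % 2 = 0 then E1 (n / 2) else O1 (n / 2)

/-- `h_2` with `h_2(2t) = E_2(t)`, `h_2(2t+1) = O_2(t)`. -/
def h2 (n : ℕ) : ℝ := if n % 2 = 0 then E2 (n / 2) else O2 (n / 2)

/-- `g(t) = Σ_{s=0}^t h_1(s) h_2(t−s)`. -/
def g (t : ℕ) : ℝ := ∑ s ∈ Finset.range (t + 1), h1 s * h2 (t - s)

/-- `ν(m)`. -/
def ν (m : ℕ) : ℝ :=
  2 * Real.log 6 + 2 * Real.log 2 * (m : ℝ) + 2 * (m : ℝ) * Real.log (m : ℝ) +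
    2 * (m : ℝ) * Real.log (Real.log (m : ℝ)) +
    5 * (m : ℝ) * Real.log (Real.log (m : ℝ)) / Real.log (m : ℝ)

/-- `ĝ(m)`. -/
def ghat (m : ℕ) : ℝ := 1 / 24 * (36 / π ^ 2 * ν m ^ 2 + 1)

/-- `α_k = (π/6)√(24k−1)`. -/
def αk (k : ℕ) : ℝ := π / 6 * Real.sqrt (24 * (k : ℝ) - 1)

/-- `C_1(k)`. -/
def C1 (k : ℕ) : ℝ :=
  3 * (k : ℝ) * (3 * (⌈Real.sqrt (k : ℝ)⌉₊ : ℝ) + 1) ^ 2 *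
      αk k ^ (6 * ⌈Real.sqrt (k : ℝ)⌉₊ + 4) /
    (2 * (⌈Real.sqrt (k : ℝ)⌉₊ : ℝ) * (Nat.factorial (6 * ⌈Real.sqrt (k : ℝ)⌉₊ + 4) : ℝ))

/-- `C_1*(k)`. -/
def C1s (k : ℕ) : ℝ :=
  (αk k ^ 2 * (Real.cosh (αk k) - 1) + 4 * C1 k) / (4 * |Real.cos (αk k)|)

/-- `C_2(k)`. -/
def C2 (k : ℕ) : ℝ :=
  9 * (k : ℝ) * (3 * (⌈Real.sqrt (k : ℝ)⌉₊ : ℝ) + 1) ^ 2 *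
      αk k ^ (6 * ⌈Real.sqrt (k : ℝ)⌉₊ + 3) /
    ((6 * (⌈Real.sqrt (k : ℝ)⌉₊ : ℝ) + 1) * (Nat.factorial (6 * ⌈Real.sqrt (k : ℝ)⌉₊ + 3) : ℝ))

/-- `C_2*(k)`. -/
def C2s (k : ℕ) : ℝ :=
  1 / 2 * (1 + 3 * (αk k ^ 2 * Real.sinh (αk k) + 4 * C2 k) / (4 * |Real.sin (αk k)|))

/-- `C_e(k)`. -/
def Ce (k : ℕ) : ℝ := 2 * C2s k + (24 * (k : ℝ) - 1) * (1 + C2s k) / 6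

/-- `C_o(k)`. -/
def Co (k : ℕ) : ℝ := 2 * C1s k + (24 * (k : ℝ) - 1) * (1 + 2 * C1s k) / 6

/-- `E_{N,1,e}(k)`. -/
def EN1e (N k : ℕ) : ℝ :=
  Real.sqrt 2 * |Real.sin (αk k)| / (Real.sqrt π * αk k) *
    ((24 * (k : ℝ) - 1) / 24) ^ (((N : ℝ) + 1) / 2) * Real.sqrt ((N : ℝ) + 1) *
    (1 + Ce k / (N : ℝ))

/-- `E_{N,1,o}(k)`. -/
def EN1o (N k : ℕ) : ℝ :=
  Real.sqrt (3 / π ^ 3) * |Real.cos (αk k)| *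
    ((24 * (k : ℝ) - 1) / 24) ^ ((N : ℝ) / 2) * Real.sqrt ((N : ℝ) + 2) *
    (1 + Co k / (N : ℝ))

/-- `E_{N,1}(k)`. -/
def EN1 (N k : ℕ) : ℝ := EN1e N k + EN1o N k

/-- `C_1(α)`. -/
def Cal1 : ℝ :=
  3 * (Real.cosh (Real.sqrt (1 + αc ^ 2) - 1) + Real.sinh (Real.sqrt (1 + αc ^ 2) - 1)) /
    (2 * π ^ 2 * (1 + αc ^ 2))

/-- `C_2(α)`. -/
def Cal2 : ℝ :=
  1 / π * Real.sqrt (3 / 2) *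
    (Real.cosh (Real.sqrt (1 + αc ^ 2) - 1) + Real.sinh (Real.sqrt (1 + αc ^ 2) - 1)) /
    (1 + αc ^ 2) ^ ((3 : ℝ) / 2)

/-- `E_N^{[2]}`. -/
def EN2 (N : ℕ) : ℝ :=
  Cal1 * ((1 + αc ^ 2) / (24 * αc ^ 2)) ^ (((N : ℝ) - 1) / 2) * (1 + 8 / (N : ℝ)) +
  Cal2 * ((1 + αc ^ 2) / (24 * αc ^ 2)) ^ ((N : ℝ) / 2) * (1 + 3 / (N : ℝ)) +
  (6 / (π * Real.sqrt 24)) ^ (N + 1) * (1 + 4 / (N : ℝ))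

/-- Coefficients `c_k(m) = Σ_{s=0}^m ω_k(s) g(m−s)`. -/
def ck (k m : ℕ) : ℝ := ∑ s ∈ Finset.range (m + 1), ω k s * g (m - s)

lemma ff_succ (x : ℝ) (n : ℕ) : ff x (n+1) = ff x n * (x - n) := rfl

lemma ff_succ' (x : ℝ) (n : ℕ) : ff x (n+1) = x * ff (x-1) n := by
  induction n with
  | zero => simp [ff]
  | succ m ih =>
    rw [ff_succ, ih, ff_succ]
    push_cast
    ring

lemma gbinom_pascal (x : ℝ) (n : ℕ) :
    gbinom x (n+1) = gbinom (x-1) (n+1) + gbinom (x-1) n := by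
  unfold gbinom
  rw [ff_succ' x n, ff_succ, Nat.factorial_succ]
  have h : (Nat.factorial n : ℝ) ≠ 0 := Nat.cast_ne_zero.2 (Nat.factorial_ne_zero n)
  have h2 : ((n:ℝ) + 1) ≠ 0 := by positivity
  push_cast
  field_simp
  ring

lemma half1 (n : ℕ) : gbinom (1/2) (n+1) = gbinom (-1/2) n / (2*((n:ℝ)+1)) := by
  unfold gbinom
  rw [ff_succ', Nat.factorial_succ]
  have h : (Nat.factorial n : ℝ) ≠ 0 := Nat.cast_ne_zero.2 (Nat.factorial_ne_zero n)
  have h2 : ((n:ℝ) + 1) ≠ 0 := by positivity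
  push_cast
  rw [show (1:ℝ)/2 - 1 = -1/2 by norm_num, div_div,
    div_eq_div_iff (by positivity) (by positivity)]
  ring

lemma half2 (n : ℕ) : gbinom (1/2) n = -gbinom (-1/2) n / (2*(n:ℝ) - 1) := by
  cases n with
  | zero => simp [gbinom, ff]
  | succ m =>
    rw [half1]
    unfold gbinom
    rw [ff_succ (-1/2), Nat.factorial_succ]
    have h : (Nat.factorial m : ℝ) ≠ 0 := Nat.cast_ne_zero.2 (Nat.factorial_ne_zero m)
    have h2 : ((m:ℝ) + 1) ≠ 0 := by positivity
    have h3 : (2*((m:ℕ)+1:ℝ) - 1) ≠ 0 := by push_cast; intro hc; nlinarith [Nat.cast_nonneg (α := ℝ) m]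
    push_cast
    field_simp
    ring

lemma pascal_sub (x : ℝ) (m : ℕ) :
    gbinom (x-1) m = gbinom x m - (if 1 ≤ m then gbinom (x-1) (m-1) else 0) := by
  cases m with
  | zero => simp [gbinom, ff]
  | succ k => rw [gbinom_pascal x k]; simp


lemma core (y : ℝ) (n : ℕ) :
    ∑ r ∈ Finset.range (n+1), y^r * gbinom (-1/2 - (r:ℝ)) (n - r)
      = ∑ j ∈ Finset.range (n+1), gbinom (1/2) j * (y - 1)^(n - j) := by
  induction n with
  | zero => norm_num [gbinom, ff]
  | succ n ih =>
    rw [Finset.sum_range_succ (f := fun j => gbinom (1/2) j * (y-1)^(n+1-j))]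
    have hR : ∑ j ∈ Finset.range (n+1), gbinom (1/2) j * (y-1)^(n+1-j)
        = (y-1) * ∑ j ∈ Finset.range (n+1), gbinom (1/2) j * (y-1)^(n-j) := by
      rw [Finset.mul_sum]
      refine Finset.sum_congr rfl fun j hj => ?_
      have hjn : j ≤ n := Nat.lt_succ_iff.1 (Finset.mem_range.1 hj)
      rw [show n+1-j = (n-j)+1 by omega, pow_succ]
      ring
    rw [hR, ← ih, Nat.sub_self, pow_zero, mul_one]
    set S := ∑ r ∈ Finset.range (n+1), y^r * gbinom (-1/2 - (r:ℝ)) (n-r) with hS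
    set T := ∑ i ∈ Finset.range n, y^(i+1) * gbinom (-1/2 - ((i:ℝ)+1)) (n-i-1) with hT
    have e1 : ∑ r ∈ Finset.range (n+1+1), y^r * gbinom (-1/2 - (r:ℝ)) (n+1-r)
        = (∑ i ∈ Finset.range (n+1), y^(i+1) * gbinom (-1/2 - ((i:ℝ)+1)) (n-i))
          + gbinom (-1/2) (n+1) := by
      rw [Finset.sum_range_succ']
      congr 1
      · exact Finset.sum_congr rfl fun i hi => by push_cast; rfl
      · norm_num
    have e2 : ∑ i ∈ Finset.range (n+1), y^(i+1) * gbinom (-1/2 - ((i:ℝ)+1)) (n-i)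
        = (∑ i ∈ Finset.range (n+1), y^(i+1) * gbinom (-1/2 - (i:ℝ)) (n-i)) - T := by
      have e2' : ∀ i ∈ Finset.range (n+1), y^(i+1) * gbinom (-1/2 - ((i:ℝ)+1)) (n-i)
          = y^(i+1) * gbinom (-1/2 - (i:ℝ)) (n-i)
            - y^(i+1) * (if 1 ≤ n-i then gbinom (-1/2 - ((i:ℝ)+1)) (n-i-1) else 0) := by
        intro i hi
        rw [show (-1/2 - ((i:ℝ)+1)) = (-1/2 - (i:ℝ)) - 1 by ring, pascal_sub]
        ring
      rw [Finset.sum_congr rfl e2', Finset.sum_sub_distrib]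
      congr 1
      rw [Finset.sum_range_succ, Nat.sub_self, if_neg (by omega), mul_zero, add_zero]
      exact Finset.sum_congr rfl fun i hi => by
        have hi' := Finset.mem_range.1 hi
        rw [if_pos (by omega : 1 ≤ n - i)]
    have e3 : ∑ i ∈ Finset.range (n+1), y^(i+1) * gbinom (-1/2 - (i:ℝ)) (n-i) = y * S := by
      rw [hS, Finset.mul_sum]
      exact Finset.sum_congr rfl fun i hi => by rw [pow_succ']; ring
    have e4 : S = T + gbinom (-1/2) n := by
      rw [hS, Finset.sum_range_succ']
      congr 1
      · exact Finset.sum_congr rfl fun i hi => by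
          rw [show n-(i+1) = n-i-1 by omega]; push_cast; rfl
      · norm_num
    have e5 : gbinom (1/2) (n+1) = gbinom (-1/2) (n+1) + gbinom (-1/2) n := by
      have := gbinom_pascal (1/2) n
      norm_num at this
      convert this using 3 <;> norm_num
    rw [e1, e2, e3, e5]
    rw [e4]
    ring

/-- closed form of the inner sum `U(t,s,u)` (Sigma simplification). -/
theorem U_closed_form (t s u : ℕ) (ht : 2 ≤ t) (hsu : u + s ≤ t - 2) :
    (∑ r ∈ Finset.range (t - u - s),
        (-1 : ℝ) ^ r * (6 / π) ^ (2 * r) * gbinom (-1 / 2 - (r : ℝ)) (t - u - s - r - 1)) =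
      -((-1 : ℝ) ^ (s + t + u) * π ^ ((2 : ℤ) + 2 * (s : ℤ) - 2 * (t : ℤ) + 2 * (u : ℤ)) *
            (36 + π ^ 2) ^ (t - u - s - 1))
      - (-1 : ℝ) ^ (s + u) * π ^ (2 + 2 * s + 2 * u) *
          (36 + π ^ 2) ^ (-(1 : ℤ) - (s : ℤ) - (u : ℤ)) * gbinom (-1 / 2) t /
          (2 * (t : ℝ) - 1)
      + (-1 : ℝ) ^ (s + t + u) * π ^ ((2 : ℤ) + 2 * (s : ℤ) - 2 * (t : ℤ) + 2 * (u : ℤ)) *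
          (36 + π ^ 2) ^ (t - u - s - 1) *
          ∑ i ∈ Finset.Icc 1 t,
            π ^ (2 * i) * (-(36 + π ^ 2)⁻¹) ^ i * gbinom (-1 / 2) i / (2 * (i : ℝ) - 1)
      + 1 / 2 * (-1 : ℝ) ^ (s + u) * π ^ (2 + 2 * s + 2 * u) *
          (36 + π ^ 2) ^ (-(1 : ℤ) - (s : ℤ) - (u : ℤ)) *
          ∑ i ∈ Finset.Icc 1 u,
            π ^ (-(2 : ℤ) * (i : ℤ)) * (-36 - π ^ 2) ^ i * gbinom (-1 / 2) (t - 1 - i) /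
              ((t : ℝ) - (i : ℝ))
      + 1 / 2 * (-1 : ℝ) ^ s * π ^ (2 + 2 * s) * (36 + π ^ 2) ^ (-(1 : ℤ) - (s : ℤ)) *
          ∑ i ∈ Finset.Icc 1 s,
            π ^ (-(2 : ℤ) * (i : ℤ)) * (-36 - π ^ 2) ^ i * gbinom (-1 / 2) (t - u - 1 - i) /
              ((t : ℝ) - (u : ℝ) - (i : ℝ)) := by
  obtain ⟨n, hn1, rfl⟩ : ∃ n, 1 ≤ n ∧ t = u + s + 1 + n := ⟨t - u - s - 1, by omega, by omega⟩
  clear ht hsu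
  have hπ : (π : ℝ) ≠ 0 := Real.pi_ne_zero
  have hπ2 : ((π : ℝ) ^ 2) ≠ 0 := pow_ne_zero _ hπ
  have hAne : (36 + π ^ 2 : ℝ) ≠ 0 := by positivity
  set B : ℝ := -(36 + π ^ 2) / π ^ 2 with hB
  have hBne : B ≠ 0 := by
    rw [hB, div_ne_zero_iff]
    constructor
    · intro h; apply hAne; linarith
    · exact hπ2
  -- helper facts
  have hBz : ∀ k : ℕ, B ^ (-(k : ℤ)) = (-1 : ℝ) ^ k * (π ^ 2) ^ k * ((36 + π ^ 2) ^ k)⁻¹ := by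
    intro k
    have h1 : ((36 + π ^ 2 : ℝ)) ^ k ≠ 0 := by positivity
    have h2 : ((π : ℝ) ^ 2) ^ k ≠ 0 := by positivity
    rw [zpow_neg, zpow_natCast, ← inv_pow,
      show B⁻¹ = -(π ^ 2) / (36 + π ^ 2) by rw [hB, inv_div, div_neg, neg_div],
      div_pow, neg_pow, div_eq_mul_inv]
  have hAz : ∀ k : ℕ, (36 + π ^ 2 : ℝ) ^ (-(k : ℤ)) = ((36 + π ^ 2) ^ k)⁻¹ := by
    intro k; rw [zpow_neg, zpow_natCast]
  have hπz : ∀ i : ℕ, (π : ℝ) ^ (-(2 : ℤ) * (i : ℤ)) = ((π ^ 2) ^ i)⁻¹ := by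
    intro i
    rw [show -(2 : ℤ) * (i : ℤ) = -((2 * i : ℕ) : ℤ) by push_cast; ring, zpow_neg, zpow_natCast,
      pow_mul]
  have half2' : ∀ m : ℕ, gbinom (-1/2) m / (2 * (m : ℝ) - 1) = -gbinom (1/2) m := by
    intro m; rw [half2, neg_div]; ring
  have half1' : ∀ m : ℕ, gbinom (-1/2) m / ((m : ℝ) + 1) = 2 * gbinom (1/2) (m + 1) := by
    intro m
    have : ((m : ℝ) + 1) ≠ 0 := by positivity
    rw [half1]
    field_simp
  -- normalize the nat-subtraction indices
  rw [show u + s + 1 + n - u - s = n + 1 by omega, Nat.add_sub_cancel,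
    show u + s + 1 + n - 1 = u + s + n by omega, show u + s + 1 + n - u = s + 1 + n by omega,
    show s + 1 + n - 1 = s + n by omega]
  set F : ℕ → ℝ := fun j => gbinom (1/2) j * B ^ ((n : ℤ) - (j : ℤ)) with hF
  -- the LHS
  have hLHS : (∑ r ∈ Finset.range (n + 1),
      (-1 : ℝ) ^ r * (6 / π) ^ (2 * r) * gbinom (-1 / 2 - (r : ℝ)) (n + 1 - r - 1)) =
      ∑ j ∈ Finset.range (n + 1), F j := by
    have step1 : (∑ r ∈ Finset.range (n + 1),
        (-1 : ℝ) ^ r * (6 / π) ^ (2 * r) * gbinom (-1 / 2 - (r : ℝ)) (n + 1 - r - 1)) =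
        ∑ r ∈ Finset.range (n + 1), (-36 / π ^ 2) ^ r * gbinom (-1/2 - (r : ℝ)) (n - r) := by
      refine Finset.sum_congr rfl fun r hr => ?_
      rw [show n + 1 - r - 1 = n - r by omega, pow_mul, ← mul_pow, div_pow]
      norm_num [neg_div]
    rw [step1, core]
    refine Finset.sum_congr rfl fun j hj => ?_
    have hjn : j ≤ n := Nat.lt_succ_iff.1 (Finset.mem_range.1 hj)
    rw [hF]
    simp only
    rw [show (-36 / π ^ 2 - 1 : ℝ) = B by rw [hB]; field_simp; ring,
      show (n : ℤ) - (j : ℤ) = ((n - j : ℕ) : ℤ) by omega, zpow_natCast]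
  rw [hLHS]
  -- coefficient identity
  have hC3 : (-1 : ℝ) ^ (s + (u + s + 1 + n) + u) *
      π ^ ((2 : ℤ) + 2 * (s : ℤ) - 2 * ((u + s + 1 + n : ℕ) : ℤ) + 2 * (u : ℤ)) *
      (36 + π ^ 2) ^ n = -B ^ ((n : ℤ)) := by
    rw [show (2 : ℤ) + 2 * (s : ℤ) - 2 * ((u + s + 1 + n : ℕ) : ℤ) + 2 * (u : ℤ)
        = -((2 * n : ℕ) : ℤ) by push_cast; ring, zpow_neg, zpow_natCast, pow_mul,
      zpow_natCast, hB, div_pow, neg_pow,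
      show s + (u + s + 1 + n) + u = 2 * (s + u) + (n + 1) by ring, pow_add, pow_mul,
      neg_one_sq, one_pow, one_mul, pow_succ]
    have h2 : ((π : ℝ) ^ 2) ^ n ≠ 0 := by positivity
    field_simp
    rw [neg_pow (36 + π ^ 2)]
    congr 1
    ring
  -- piece 2
  have h2 : (-1 : ℝ) ^ (s + u) * π ^ (2 + 2 * s + 2 * u) *
      (36 + π ^ 2) ^ (-(1 : ℤ) - (s : ℤ) - (u : ℤ)) * gbinom (-1 / 2) (u + s + 1 + n) /
      (2 * ((u + s + 1 + n : ℕ) : ℝ) - 1) = F (u + s + 1 + n) := by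
    rw [mul_div_assoc, half2' (u + s + 1 + n), hF]
    simp only
    rw [show (n : ℤ) - ((u + s + 1 + n : ℕ) : ℤ) = -((u + s + 1 : ℕ) : ℤ) by omega,
      hBz (u + s + 1),
      show -(1 : ℤ) - (s : ℤ) - (u : ℤ) = -((u + s + 1 : ℕ) : ℤ) by omega, hAz (u + s + 1)]
    have h1 : ((36 + π ^ 2 : ℝ)) ^ (u + s + 1) ≠ 0 := by positivity
    field_simp
    ring
  -- piece 1 + piece 3
  have h3 : ∀ i, i ∈ Finset.Icc 1 (u + s + 1 + n) →
      (-B ^ ((n : ℤ))) * (π ^ (2 * i) * (-(36 + π ^ 2)⁻¹) ^ i * gbinom (-1 / 2) i /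
        (2 * (i : ℝ) - 1)) = F i := by
    intro i _
    rw [mul_div_assoc, half2' i, hF]
    simp only
    rw [sub_eq_add_neg, zpow_add₀ hBne, hBz i, pow_mul]
    have h1 : ((36 + π ^ 2 : ℝ)) ^ i ≠ 0 := by positivity
    field_simp
    have hXY : ((36 + π ^ 2)⁻¹ : ℝ) ^ i * (36 + π ^ 2) ^ i = 1 := by
      rw [← mul_pow, inv_mul_cancel₀ hAne, one_pow]
    linear_combination (gbinom (1/2) i * (-1 : ℝ) ^ i) * hXY
  have hF0 : F 0 = B ^ ((n : ℤ)) := by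
    rw [hF]; simp [gbinom, ff]
  have h3' : (-1 : ℝ) ^ (s + (u + s + 1 + n) + u) *
      π ^ ((2 : ℤ) + 2 * (s : ℤ) - 2 * ((u + s + 1 + n : ℕ) : ℤ) + 2 * (u : ℤ)) *
      (36 + π ^ 2) ^ n *
      (∑ i ∈ Finset.Icc 1 (u + s + 1 + n),
        π ^ (2 * i) * (-(36 + π ^ 2)⁻¹) ^ i * gbinom (-1 / 2) i / (2 * (i : ℝ) - 1)) =
      ∑ i ∈ Finset.Icc 1 (u + s + 1 + n), F i := by
    rw [hC3, Finset.mul_sum]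
    exact Finset.sum_congr rfl h3
  have h4 : 1 / 2 * (-1 : ℝ) ^ (s + u) * π ^ (2 + 2 * s + 2 * u) *
      (36 + π ^ 2) ^ (-(1 : ℤ) - (s : ℤ) - (u : ℤ)) *
      (∑ i ∈ Finset.Icc 1 u,
        π ^ (-(2 : ℤ) * (i : ℤ)) * (-36 - π ^ 2) ^ i * gbinom (-1 / 2) (u + s + n - i) /
          (((u + s + 1 + n : ℕ) : ℝ) - (i : ℝ))) =
      -∑ j ∈ Finset.Ico (s + 1 + n) (u + s + 1 + n), F j := by
    rw [Finset.mul_sum, ← Finset.sum_neg_distrib]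
    refine Finset.sum_nbij' (i := fun i => u + s + 1 + n - i) (j := fun j => u + s + 1 + n - j)
      ?_ ?_ ?_ ?_ ?_
    · intro a ha; simp only [Finset.mem_Icc, Finset.mem_Ico] at *; omega
    · intro a ha; simp only [Finset.mem_Icc, Finset.mem_Ico] at *; omega
    · intro a ha; simp only [Finset.mem_Icc] at ha; omega
    · intro a ha; simp only [Finset.mem_Ico] at ha; omega
    · intro i hi
      obtain ⟨hi1, hi2⟩ := Finset.mem_Icc.1 hi
      have e : ((u + s + 1 + n : ℕ) : ℝ) - (i : ℝ) = ((u + s + n - i : ℕ) : ℝ) + 1 := by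
        rw [Nat.cast_sub (show i ≤ u + s + n by omega)]
        push_cast
        ring
      rw [e, mul_div_assoc, half1' (u + s + n - i),
        show u + s + n - i + 1 = u + s + 1 + n - i by omega, hF]
      simp only
      rw [show (n : ℤ) - ((u + s + 1 + n - i : ℕ) : ℤ) = -((u + s + 1 - i : ℕ) : ℤ) by omega,
        hBz (u + s + 1 - i),
        show -(1 : ℤ) - (s : ℤ) - (u : ℤ) = -((u + s + 1 : ℕ) : ℤ) by omega, hAz (u + s + 1),
        hπz i, show ((-36 : ℝ) - π ^ 2) = -(36 + π ^ 2) by ring,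
        show ((-(36 + π ^ 2) : ℝ)) ^ i = (-1) ^ i * (36 + π ^ 2) ^ i from neg_pow _ _,
        pow_sub₀ (-1 : ℝ) (by norm_num) (show i ≤ u + s + 1 by omega),
        pow_sub₀ ((π : ℝ) ^ 2) hπ2 (show i ≤ u + s + 1 by omega),
        pow_sub₀ (36 + (π : ℝ) ^ 2) hAne (show i ≤ u + s + 1 by omega)]
      have hn1' : ((-1 : ℝ)) ^ i ≠ 0 := by
        intro hc; simpa using congrArg (|·|) hc
      have hp1 : ((π : ℝ) ^ 2) ^ i ≠ 0 := by positivity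
      have hp2 : ((36 + π ^ 2 : ℝ)) ^ i ≠ 0 := by positivity
      have hp3 : ((36 + π ^ 2 : ℝ)) ^ (u + s + 1) ≠ 0 := by positivity
      field_simp
      ring_nf
      rw [show ((-1 : ℝ)) ^ (i * 2) = 1 from Even.neg_one_pow ⟨i, by ring⟩]
      ring
  have h5 : 1 / 2 * (-1 : ℝ) ^ s * π ^ (2 + 2 * s) * (36 + π ^ 2) ^ (-(1 : ℤ) - (s : ℤ)) *
      (∑ i ∈ Finset.Icc 1 s,
        π ^ (-(2 : ℤ) * (i : ℤ)) * (-36 - π ^ 2) ^ i * gbinom (-1 / 2) (s + n - i) /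
          (((u + s + 1 + n : ℕ) : ℝ) - (u : ℝ) - (i : ℝ))) =
      -∑ j ∈ Finset.Ico (n + 1) (s + 1 + n), F j := by
    rw [Finset.mul_sum, ← Finset.sum_neg_distrib]
    refine Finset.sum_nbij' (i := fun i => s + 1 + n - i) (j := fun j => s + 1 + n - j)
      ?_ ?_ ?_ ?_ ?_
    · intro a ha; simp only [Finset.mem_Icc, Finset.mem_Ico] at *; omega
    · intro a ha; simp only [Finset.mem_Icc, Finset.mem_Ico] at *; omega
    · intro a ha; simp only [Finset.mem_Icc] at ha; omega
    · intro a ha; simp only [Finset.mem_Ico] at ha; omega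
    · intro i hi
      obtain ⟨hi1, hi2⟩ := Finset.mem_Icc.1 hi
      have e : ((u + s + 1 + n : ℕ) : ℝ) - (u : ℝ) - (i : ℝ) = ((s + n - i : ℕ) : ℝ) + 1 := by
        rw [Nat.cast_sub (show i ≤ s + n by omega)]
        push_cast
        ring
      rw [e, mul_div_assoc, half1' (s + n - i),
        show s + n - i + 1 = s + 1 + n - i by omega, hF]
      simp only
      rw [show (n : ℤ) - ((s + 1 + n - i : ℕ) : ℤ) = -((s + 1 - i : ℕ) : ℤ) by omega,
        hBz (s + 1 - i),
        show -(1 : ℤ) - (s : ℤ) = -((s + 1 : ℕ) : ℤ) by omega, hAz (s + 1),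
        hπz i, show ((-36 : ℝ) - π ^ 2) = -(36 + π ^ 2) by ring,
        show ((-(36 + π ^ 2) : ℝ)) ^ i = (-1) ^ i * (36 + π ^ 2) ^ i from neg_pow _ _,
        pow_sub₀ (-1 : ℝ) (by norm_num) (show i ≤ s + 1 by omega),
        pow_sub₀ ((π : ℝ) ^ 2) hπ2 (show i ≤ s + 1 by omega),
        pow_sub₀ (36 + (π : ℝ) ^ 2) hAne (show i ≤ s + 1 by omega)]
      have hn1' : ((-1 : ℝ)) ^ i ≠ 0 := by
        intro hc; simpa using congrArg (|·|) hc
      have hp1 : ((π : ℝ) ^ 2) ^ i ≠ 0 := by positivity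
      have hp2 : ((36 + π ^ 2 : ℝ)) ^ i ≠ 0 := by positivity
      have hp3 : ((36 + π ^ 2 : ℝ)) ^ (s + 1) ≠ 0 := by positivity
      field_simp
      ring_nf
      rw [show ((-1 : ℝ)) ^ (i * 2) = 1 from Even.neg_one_pow ⟨i, by ring⟩]
      ring
  have hsplit : (∑ j ∈ Finset.range (n + 1), F j) +
      ((∑ j ∈ Finset.Ico (n + 1) (s + 1 + n), F j) +
        (∑ j ∈ Finset.Ico (s + 1 + n) (u + s + 1 + n), F j) + F (u + s + 1 + n)) =
      ∑ j ∈ Finset.range (u + s + 1 + n + 1), F j := by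
    simp only [Finset.range_eq_Ico]
    rw [Finset.sum_Ico_succ_top (show (0 : ℕ) ≤ u + s + 1 + n by omega) F,
      ← Finset.sum_Ico_consecutive F (show (0 : ℕ) ≤ s + 1 + n by omega)
        (show s + 1 + n ≤ u + s + 1 + n by omega),
      ← Finset.sum_Ico_consecutive F (show (0 : ℕ) ≤ n + 1 by omega)
        (show n + 1 ≤ s + 1 + n by omega)]
    ring
  have hIcc : ∑ i ∈ Finset.Icc 1 (u + s + 1 + n), F i =
      (∑ j ∈ Finset.range (u + s + 1 + n + 1), F j) - F 0 := by
    have hins : Finset.range (u + s + 1 + n + 1) = insert 0 (Finset.Icc 1 (u + s + 1 + n)) := by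
      ext a
      simp [Nat.lt_succ_iff]
      omega
    rw [hins, Finset.sum_insert (by simp)]
    ring
  linarith [h2, h3', h4, h5, hsplit, hIcc, hF0, hC3]
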